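/- Let N be a natural number and p, λ, β real numbers with 1 < p < N, λ > 0, β > 0. Let φ, g : ℝ → ℝ with φ continuously differentiable on [1,∞), φ(r) > 0 for all r ≥ 1, g continuous on [1,∞) with g(r) > 0 for all r ≥ 1, F satisfying the radial eigenvalue ODE on (1,∞), the Robin condition φ'(1) = β^(1/(p−1))·φ(1), and r_* > 1 with φ'(r_*) = 0. Then for every r ≥ 1: φ(r) ≤ φ(1)·(1 + ((p−1)/(N−p))·β^(1/(p−1))). -/

import Mathlib

open Real Set

/-- The radial quantity `F(r) = r^(N-1) |φ'(r)|^(p-2) φ'(r)`, written with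
real exponents via the sign function. -/
noncomputable def radialF (N : ℕ) (p : ℝ) (φ : ℝ → ℝ) (r : ℝ) : ℝ :=
  r ^ ((N : ℝ) - 1) * Real.sign (deriv φ r) * |deriv φ r| ^ (p - 1)

lemma sign_rpow_continuous (p : ℝ) (hp : 1 < p) :
    Continuous fun x : ℝ => Real.sign x * |x| ^ (p - 1) := by
  rw [continuous_iff_continuousAt]
  intro a
  rcases lt_trichotomy a 0 with h | h | h
  · have hev : ∀ᶠ x in nhds a, -(|x| ^ (p - 1)) = Real.sign x * |x| ^ (p - 1) := by
      filter_upwards [eventually_lt_nhds h] with x hx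
      rw [Real.sign_of_neg hx]; ring
    refine ContinuousAt.congr ?_ hev
    exact ((continuous_abs.continuousAt).rpow_const
      (Or.inl (abs_ne_zero.mpr (ne_of_lt h)))).neg
  · subst h
    have h0 : Real.sign (0:ℝ) * |(0:ℝ)| ^ (p - 1) = 0 := by simp
    rw [ContinuousAt, h0]
    apply squeeze_zero_norm (a := fun x : ℝ => |x| ^ (p - 1))
    · intro x
      have h1 : |Real.sign x| ≤ 1 := by
        rcases lt_trichotomy x 0 with h | h | h <;>
          simp [Real.sign_of_neg, Real.sign_of_pos, h, Real.sign_zero]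
      have habs : |Real.sign x * |x| ^ (p - 1)| = |Real.sign x| * |(|x| ^ (p - 1))| :=
        abs_mul _ _
      rw [Real.norm_eq_abs, habs, abs_of_nonneg (by positivity : (0:ℝ) ≤ |x| ^ (p - 1))]
      nlinarith [abs_nonneg (Real.sign x), Real.rpow_nonneg (abs_nonneg x) (p-1)]
    · have hc : ContinuousAt (fun x : ℝ => |x| ^ (p - 1)) 0 :=
        (continuous_abs.continuousAt).rpow_const (Or.inr (by linarith))
      have h2 := hc.tendsto
      simpa [Real.zero_rpow (by linarith : p - 1 ≠ 0)] using h2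
  · have hev : ∀ᶠ x in nhds a, |x| ^ (p - 1) = Real.sign x * |x| ^ (p - 1) := by
      filter_upwards [eventually_gt_nhds h] with x hx
      rw [Real.sign_of_pos hx]; ring
    refine ContinuousAt.congr ?_ hev
    exact (continuous_abs.continuousAt).rpow_const (Or.inl (abs_ne_zero.mpr (ne_of_gt h)))

/-- Global pointwise bound (3.5) on the radial principal eigenfunction:
`φ(r) ≤ φ(1) (1 + ((p-1)/(N-p)) β^(1/(p-1)))` for all `r ≥ 1`. -/
theorem global_pointwise_bound (N : ℕ) (p lam β : ℝ)
    (hp : 1 < p) (hpN : p < N) (hlam : 0 < lam) (hβ : 0 < β)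
    (φ g : ℝ → ℝ)
    (hφdiff : ∀ r ≥ (1 : ℝ), DifferentiableAt ℝ φ r)
    (hφC1 : ContinuousOn (deriv φ) (Set.Ici 1))
    (hφpos : ∀ r ≥ (1 : ℝ), 0 < φ r)
    (hgcont : ContinuousOn g (Set.Ici 1))
    (hgpos : ∀ r ≥ (1 : ℝ), 0 < g r)
    (hODE : ∀ r > (1 : ℝ),
      HasDerivAt (radialF N p φ) (-(lam * r ^ ((N : ℝ) - 1) * g r * φ r ^ (p - 1))) r)
    (hRobin : deriv φ 1 = β ^ (1 / (p - 1)) * φ 1)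
    (rstar : ℝ) (hrstar : 1 < rstar) (hcrit : deriv φ rstar = 0) :
    ∀ r ≥ (1 : ℝ),
      φ r ≤ φ 1 * (1 + ((p - 1) / ((N : ℝ) - p)) * β ^ (1 / (p - 1))) := by
  have hp1 : (0:ℝ) < p - 1 := by linarith
  have hNp : (0:ℝ) < (N:ℝ) - p := by linarith
  have hN1 : (0:ℝ) < (N:ℝ) - 1 := by linarith
  have hφ1 : 0 < φ 1 := hφpos 1 le_rfl
  set c : ℝ := β ^ (1 / (p - 1)) * φ 1 with hc
  have hcpos : 0 < c := mul_pos (Real.rpow_pos_of_pos hβ _) hφ1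
  set m : ℝ := ((N:ℝ) - 1) / (p - 1) with hm
  have hm1 : 1 < m := by
    rw [hm, lt_div_iff₀ hp1]; linarith
  -- F is continuous on [1, ∞)
  have hFcont : ContinuousOn (radialF N p φ) (Set.Ici 1) := by
    have h1 : ContinuousOn (fun r : ℝ => r ^ ((N:ℝ) - 1)) (Set.Ici 1) :=
      continuousOn_id.rpow_const fun x _ => Or.inr (by linarith)
    have h2 : ContinuousOn
        (fun r : ℝ => Real.sign (deriv φ r) * |deriv φ r| ^ (p - 1)) (Set.Ici 1) :=
      (sign_rpow_continuous p hp).comp_continuousOn hφC1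
    have := h1.mul h2
    refine this.congr fun r _ => ?_
    simp [radialF, mul_assoc]
  -- F is antitone on [1, ∞)
  have hFanti : StrictAntiOn (radialF N p φ) (Set.Ici 1) := by
    apply strictAntiOn_of_deriv_neg (convex_Ici 1) hFcont
    intro x hx
    rw [interior_Ici] at hx
    rw [(hODE x hx).deriv]
    have hx1 : (1:ℝ) ≤ x := le_of_lt hx
    have hxpos : (0:ℝ) < x := by linarith
    have h1 : (0:ℝ) < x ^ ((N:ℝ) - 1) := Real.rpow_pos_of_pos hxpos _
    have h2 : (0:ℝ) < φ x ^ (p - 1) := Real.rpow_pos_of_pos (hφpos x hx1) _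
    nlinarith [mul_pos (mul_pos (mul_pos hlam h1) (hgpos x hx1)) h2]
  -- value of F at 1
  have hd1pos : 0 < deriv φ 1 := by
    rw [hRobin]; exact mul_pos (Real.rpow_pos_of_pos hβ _) hφ1
  have hF1 : radialF N p φ 1 = β * φ 1 ^ (p - 1) := by
    rw [radialF, Real.one_rpow, Real.sign_of_pos hd1pos, abs_of_pos hd1pos, hRobin,
      Real.mul_rpow (Real.rpow_nonneg hβ.le _) hφ1.le,
      ← Real.rpow_mul hβ.le]
    have : 1 / (p - 1) * (p - 1) = 1 := by field_simp
    rw [this, Real.rpow_one, one_mul, one_mul]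
  -- Step A: pointwise derivative bound
  have hstepA : ∀ r ≥ (1:ℝ), deriv φ r ≤ c * r ^ (-m) := by
    intro r hr
    have hr0 : (0:ℝ) < r := by linarith
    have hrhs : 0 < c * r ^ (-m) := mul_pos hcpos (Real.rpow_pos_of_pos hr0 _)
    rcases le_or_gt (deriv φ r) 0 with hd | hd
    · linarith
    · -- F r ≤ F 1
      have hFle : radialF N p φ r ≤ β * φ 1 ^ (p - 1) := by
        rw [← hF1]
        rcases eq_or_lt_of_le hr with h | h
        · rw [← h]
        · exact (hFanti (mem_Ici.mpr le_rfl) (mem_Ici.mpr hr) h).le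
      have hFr : radialF N p φ r = r ^ ((N:ℝ) - 1) * (deriv φ r) ^ (p - 1) := by
        rw [radialF, Real.sign_of_pos hd, abs_of_pos hd, mul_one]
      rw [hFr] at hFle
      have hrN : (0:ℝ) < r ^ ((N:ℝ) - 1) := Real.rpow_pos_of_pos hr0 _
      have hdiv : (deriv φ r) ^ (p - 1) ≤ (β * φ 1 ^ (p - 1)) / r ^ ((N:ℝ) - 1) := by
        rw [le_div_iff₀ hrN]; linarith [hFle]
      have hmono := Real.rpow_le_rpow (Real.rpow_nonneg hd.le _) hdiv
        (by positivity : (0:ℝ) ≤ 1 / (p - 1))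
      have hlhs : ((deriv φ r) ^ (p - 1)) ^ (1 / (p - 1)) = deriv φ r := by
        rw [← Real.rpow_mul hd.le]
        have : (p - 1) * (1 / (p - 1)) = 1 := by field_simp
        rw [this, Real.rpow_one]
      have hrhs' : ((β * φ 1 ^ (p - 1)) / r ^ ((N:ℝ) - 1)) ^ (1 / (p - 1))
          = c * r ^ (-m) := by
        rw [Real.div_rpow (by positivity) hrN.le,
          Real.mul_rpow hβ.le (Real.rpow_nonneg hφ1.le _),
          ← Real.rpow_mul hφ1.le, ← Real.rpow_mul hr0.le]
        have h1 : (p - 1) * (1 / (p - 1)) = 1 := by field_simp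
        have h2 : ((N:ℝ) - 1) * (1 / (p - 1)) = m := by rw [hm]; ring
        rw [h1, h2, Real.rpow_one, Real.rpow_neg hr0.le, div_eq_mul_inv, hc]
      rw [hlhs, hrhs'] at hmono
      exact hmono
  -- Step B: integrate
  intro r hr
  have hsub : Set.uIcc (1:ℝ) r ⊆ Set.Ici 1 := by
    rw [Set.uIcc_of_le hr]
    exact fun x hx => hx.1
  have hint1 : IntervalIntegrable (deriv φ) MeasureTheory.volume 1 r :=
    (hφC1.mono hsub).intervalIntegrable
  have hcont2 : ContinuousOn (fun s : ℝ => c * s ^ (-m)) (Set.uIcc 1 r) := by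
    apply continuousOn_const.mul
    apply continuousOn_id.rpow_const
    intro x hx
    have : (1:ℝ) ≤ x := hsub hx
    exact Or.inl (by simp only [id_eq]; linarith)
  have hint2 : IntervalIntegrable (fun s : ℝ => c * s ^ (-m)) MeasureTheory.volume 1 r :=
    hcont2.intervalIntegrable
  have hFTC : ∫ s in (1:ℝ)..r, deriv φ s = φ r - φ 1 := by
    apply intervalIntegral.integral_deriv_eq_sub
    · intro x hx
      exact hφdiff x (hsub hx)
    · exact hint1
  have hmono : ∫ s in (1:ℝ)..r, deriv φ s ≤ ∫ s in (1:ℝ)..r, c * s ^ (-m) := by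
    apply intervalIntegral.integral_mono_on hr hint1 hint2
    intro x hx
    exact hstepA x hx.1
  have hval : ∫ s in (1:ℝ)..r, c * s ^ (-m) = c * ((r ^ (-m + 1) - 1) / (-m + 1)) := by
    rw [intervalIntegral.integral_const_mul]
    congr 1
    rw [integral_rpow (Or.inr ⟨by intro h; rw [neg_eq_iff_eq_neg] at h; linarith,
      Set.notMem_uIcc_of_lt one_pos (by linarith)⟩)]
    rw [Real.one_rpow]
  have hbound : (r ^ (-m + 1) - 1) / (-m + 1) ≤ (p - 1) / ((N:ℝ) - p) := by
    have hmne : m - 1 > 0 := by linarith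
    have ht : (0:ℝ) ≤ r ^ (-m + 1) := Real.rpow_nonneg (by linarith) _
    have heq : (r ^ (-m + 1) - 1) / (-m + 1) = (1 - r ^ (-m + 1)) / (m - 1) := by
      rw [div_eq_div_iff (by linarith) (by linarith)]; ring
    rw [heq]
    have h2 : (1 - r ^ (-m + 1)) / (m - 1) ≤ 1 / (m - 1) := by
      gcongr; linarith
    have h3 : (1:ℝ) / (m - 1) = (p - 1) / ((N:ℝ) - p) := by
      have : m - 1 = ((N:ℝ) - p) / (p - 1) := by
        rw [hm]; field_simp; ring
      rw [this, one_div_div]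
    linarith
  have hfinal : φ r - φ 1 ≤ c * ((p - 1) / ((N:ℝ) - p)) := by
    calc φ r - φ 1 = ∫ s in (1:ℝ)..r, deriv φ s := hFTC.symm
      _ ≤ ∫ s in (1:ℝ)..r, c * s ^ (-m) := hmono
      _ = c * ((r ^ (-m + 1) - 1) / (-m + 1)) := hval
      _ ≤ c * ((p - 1) / ((N:ℝ) - p)) := mul_le_mul_of_nonneg_left hbound hcpos.le
  have hexp : φ 1 * (1 + ((p - 1) / ((N : ℝ) - p)) * β ^ (1 / (p - 1)))
      = φ 1 + c * ((p - 1) / ((N:ℝ) - p)) := by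
    rw [hc]; ring
  linarith
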